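/- Let ξ be a measurable partition of a standard probability space (X, μ) with finite Shannon entropy H(ξ), and let ρ_ξ be the cut semimetric of ξ (ρ_ξ(x,y) = 0 if x, y lie in the same cell, 1 otherwise). Then for every ε > 0, the ε-entropy satisfies ℍ_ε(X, μ, ρ_ξ) ≤ H(ξ)/ε, where ℍ_ε(X, μ, ρ) = log₂ k for the minimal k such that X = X₀ ∪ X₁ ∪ ... ∪ X_k with μ(X₀) < ε and diam_ρ(X_i) < ε for i ≥ 1. -/

import Mathlib

open MeasureTheory Filter Pointwise

section EpsEntropy

variable {α : Type*} [MeasurableSpace α]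

/-- `k` works for an `ε`-cover: `X = X₀ ∪ … ∪ X_k` with `μ X₀ < ε` and `diam_ρ X_i < ε` for `i ≥ 1`. -/
def IsEntCover (μ : Measure α) (ρ : α → α → ℝ) (ε : ℝ) (k : ℕ) : Prop :=
  ∃ A : Fin (k + 1) → Set α, (∀ i, MeasurableSet (A i)) ∧ (⋃ i, A i) = Set.univ ∧
    μ (A 0) < ENNReal.ofReal ε ∧
    ∀ i : Fin (k + 1), i ≠ 0 → ∀ x ∈ A i, ∀ y ∈ A i, ρ x y < ε

/-- The ε-entropy `ℍ_ε(X, μ, ρ) = log₂ k` for the minimal admissible `k`. -/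
noncomputable def epsEntropy (μ : Measure α) (ρ : α → α → ℝ) (ε : ℝ) : ℝ :=
  Real.logb 2 ((sInf {k : ℕ | 0 < k ∧ IsEntCover μ ρ ε k} : ℕ) : ℝ)

/-- A semimetric is admissible iff all of its `ε`-entropies are finite. -/
def Admissible (μ : Measure α) (ρ : α → α → ℝ) : Prop :=
  ∀ ε : ℝ, 0 < ε → ∃ k : ℕ, 0 < k ∧ IsEntCover μ ρ ε k

end EpsEntropy

lemma epsEntropy_le_of_cover {α : Type*} [MeasurableSpace α] (μ : Measure α)
    (ρ : α → α → ℝ) (ε : ℝ) (m : ℕ) (hm : 0 < m) (hc : IsEntCover μ ρ ε m) :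
    epsEntropy μ ρ ε ≤ Real.logb 2 m := by
  have hne : {k : ℕ | 0 < k ∧ IsEntCover μ ρ ε k}.Nonempty := ⟨m, hm, hc⟩
  have h1 := Nat.sInf_mem hne
  have h2 : sInf {k : ℕ | 0 < k ∧ IsEntCover μ ρ ε k} ≤ m := Nat.sInf_le ⟨hm, hc⟩
  exact Real.logb_le_logb_of_le one_lt_two (by exact_mod_cast h1.1) (by exact_mod_cast h2)

/-- The `ε`-entropy of the cut semimetric of a countable partition `ξ` (encoded by a
measurable `P : X → ℕ`) is at most `H(ξ)/ε`, where `H(ξ) = -∫ log₂ μ(ξ(x)) dμ(x)`. -/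
theorem epsEntropy_cut_le_shannon {X : Type*} [MeasurableSpace X]
    (μ : Measure X) [IsProbabilityMeasure μ]
    (P : X → ℕ) (hP : Measurable P)
    (hint : Integrable (fun x => Real.logb 2 (μ (P ⁻¹' {P x})).toReal) μ)
    (H : ℝ) (hH : H = -∫ x, Real.logb 2 (μ (P ⁻¹' {P x})).toReal ∂μ)
    (ρ : X → X → ℝ) (hρ : ρ = fun x y => if P x = P y then (0 : ℝ) else 1)
    (ε : ℝ) (hε : 0 < ε) :
    epsEntropy μ ρ ε ≤ H / ε := by
  set p : ℕ → ENNReal := fun n => μ (P ⁻¹' {n}) with hpdef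
  have hcell : ∀ n : ℕ, MeasurableSet (P ⁻¹' {n}) :=
    fun n => hP (measurableSet_singleton n)
  have hple : ∀ n, p n ≤ 1 := fun n => prob_le_one
  have hpne : ∀ n, p n ≠ ⊤ := fun n => (lt_of_le_of_lt (hple n) ENNReal.one_lt_top).ne
  have hptr : ∀ n, (p n).toReal ≤ 1 := fun n => by
    rw [← ENNReal.toReal_one]
    exact ENNReal.toReal_mono ENNReal.one_ne_top (hple n)
  -- the integrand is nonnegative
  have hfnn : ∀ x, 0 ≤ -Real.logb 2 (p (P x)).toReal := by
    intro x
    have := Real.logb_nonpos (b := 2) one_lt_two ENNReal.toReal_nonneg (hptr (P x))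
    linarith
  have hHint : H = ∫ x, -Real.logb 2 (p (P x)).toReal ∂μ := by
    rw [hH, ← integral_neg]
  have hH0 : 0 ≤ H := by
    rw [hHint]; exact integral_nonneg hfnn
  -- case ε > 1 : trivial cover with one set
  rcases le_or_gt ε 1 with hε1 | hε1
  swap
  · have hcov : IsEntCover μ ρ ε 1 := by
      refine ⟨fun i => if i = 0 then ∅ else Set.univ, fun i => by
        by_cases h : i = 0 <;> simp [h], ?_, ?_, ?_⟩
      · apply Set.eq_univ_of_univ_subset
        intro x _
        exact Set.mem_iUnion.2 ⟨1, by norm_num⟩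
      · simp [ENNReal.ofReal_pos.2 hε]
      · intro i hi x hx y hy
        rw [hρ]
        by_cases h : P x = P y <;> simp [h] <;> linarith
    calc epsEntropy μ ρ ε ≤ Real.logb 2 (1 : ℕ) := epsEntropy_le_of_cover μ ρ ε 1 one_pos hcov
      _ = 0 := by norm_num
      _ ≤ H / ε := div_nonneg hH0 hε.le
  -- main case ε ≤ 1
  set k : ℕ := ⌊(2 : ℝ) ^ (H / ε)⌋₊ with hkdef
  have hrnn : (0:ℝ) ≤ (2:ℝ) ^ (H / ε) := (Real.rpow_pos_of_pos two_pos _).le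
  have hk1 : 1 ≤ k := by
    rw [hkdef, Nat.one_le_floor_iff]
    exact Real.one_le_rpow one_le_two (div_nonneg hH0 hε.le)
  have hkler : (k : ℝ) ≤ (2:ℝ) ^ (H / ε) := Nat.floor_le hrnn
  have hrltk : (2:ℝ) ^ (H / ε) < (k : ℝ) + 1 := Nat.lt_floor_add_one _
  have hlogk : Real.logb 2 k ≤ H / ε := by
    calc Real.logb 2 k ≤ Real.logb 2 ((2:ℝ) ^ (H / ε)) :=
          Real.logb_le_logb_of_le one_lt_two (by exact_mod_cast hk1) hkler
      _ = H / ε := Real.logb_rpow two_pos (by norm_num)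
  set c : ℝ := Real.logb 2 ((k : ℝ) + 1) with hcdef
  have hclt : H / ε < c := by
    calc H / ε = Real.logb 2 ((2:ℝ) ^ (H / ε)) := (Real.logb_rpow two_pos (by norm_num)).symm
      _ < c := Real.logb_lt_logb one_lt_two (Real.rpow_pos_of_pos two_pos _) hrltk
  have hc0 : 0 < c := lt_of_le_of_lt (div_nonneg hH0 hε.le) hclt
  -- big cells
  set S : Set ℕ := {n | (1:ℝ) / ((k:ℝ) + 1) < (p n).toReal} with hSdef
  -- any finset inside S has card ≤ k
  have hsumle : ∀ T : Finset ℕ, ∑ n ∈ T, (p n).toReal ≤ 1 := by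
    intro T
    rw [← ENNReal.toReal_sum (fun n _ => hpne n), ← ENNReal.toReal_one]
    apply ENNReal.toReal_mono ENNReal.one_ne_top
    calc ∑ n ∈ T, p n = μ (⋃ n ∈ T, P ⁻¹' {n}) := by
          rw [measure_biUnion_finset ?_ (fun n _ => hcell n)]
          intro a _ b _ hab
          exact Set.disjoint_left.2 fun x hx hx' => hab (by
            simp only [Set.mem_preimage, Set.mem_singleton_iff] at hx hx'
            rw [← hx, ← hx'])
      _ ≤ μ Set.univ := measure_mono (Set.subset_univ _)
      _ = 1 := measure_univ
  have hcard : ∀ T : Finset ℕ, ↑T ⊆ S → T.card ≤ k := by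
    intro T hT
    by_contra hlt
    push_neg at hlt
    have hTne : T.Nonempty := Finset.card_pos.1 (by omega)
    have h1 : (T.card : ℝ) * ((1:ℝ) / ((k:ℝ) + 1)) < ∑ n ∈ T, (p n).toReal := by
      have := Finset.sum_lt_sum_of_nonempty hTne
        (f := fun _ => (1:ℝ) / ((k:ℝ) + 1)) (g := fun n => (p n).toReal) (fun n hn => hT hn)
      simpa [nsmul_eq_mul] using this
    have h2 : (1:ℝ) ≤ (T.card : ℝ) * ((1:ℝ) / ((k:ℝ) + 1)) := by
      rw [mul_one_div, le_div_iff₀ (by positivity), one_mul]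
      have : ((k:ℝ) + 1) ≤ (T.card : ℝ) := by exact_mod_cast hlt
      linarith
    linarith [hsumle T]
  have hSfin : S.Finite := by
    by_contra hinf
    obtain ⟨T, hTS, hTc⟩ := Set.Infinite.exists_subset_card_eq hinf (k + 1)
    have := hcard T hTS
    omega
  set T : Finset ℕ := hSfin.toFinset with hTdef
  have hTcard : T.card ≤ k := hcard T (by simp [hTdef])
  set l : List ℕ := T.toList with hldef
  have hllen : l.length ≤ k := by rw [hldef, Finset.length_toList]; exact hTcard
  have hNnull : μ (⋃ n ∈ {n : ℕ | p n = 0}, P ⁻¹' {n}) = 0 :=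
    (measure_biUnion_null_iff (Set.to_countable _)).2 fun n hn => hn
  set N : Set X := ⋃ n ∈ {n : ℕ | p n = 0}, P ⁻¹' {n} with hNdef
  set B : Set X := (P ⁻¹' Sᶜ) \ N with hBdef
  have hS0meas : MeasurableSet (P ⁻¹' Sᶜ) := hP MeasurableSet.of_discrete
  have hBmeas : MeasurableSet B :=
    hS0meas.diff (MeasurableSet.biUnion (Set.to_countable _) fun n _ => hcell n)
  have hμB : μ B = μ (P ⁻¹' Sᶜ) := measure_diff_null hNnull
  -- pointwise bound on B
  have hptwise : ∀ x ∈ B, c ≤ -Real.logb 2 (p (P x)).toReal := by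
    intro x hx
    obtain ⟨hx1, hx2⟩ := hx
    have hnotS : P x ∉ S := hx1
    have hle : (p (P x)).toReal ≤ (((k:ℝ) + 1))⁻¹ := by
      rw [hSdef] at hnotS
      simp only [Set.mem_setOf_eq, not_lt, one_div] at hnotS
      exact hnotS
    have hpos : 0 < (p (P x)).toReal := by
      refine ENNReal.toReal_pos ?_ (hpne _)
      intro h0
      exact hx2 (Set.mem_biUnion h0 rfl)
    have hinv : ((k:ℝ) + 1) ≤ ((p (P x)).toReal)⁻¹ := by
      rw [← inv_inv ((k:ℝ) + 1)]
      exact inv_anti₀ hpos hle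
    calc c ≤ Real.logb 2 (((p (P x)).toReal)⁻¹) :=
          Real.logb_le_logb_of_le one_lt_two (by positivity) hinv
      _ = -Real.logb 2 (p (P x)).toReal := Real.logb_inv _ _
  -- integral bound
  have hkey : c * (μ (P ⁻¹' Sᶜ)).toReal ≤ H := by
    have hintneg : Integrable (fun x => -Real.logb 2 (p (P x)).toReal) μ := hint.neg
    calc c * (μ (P ⁻¹' Sᶜ)).toReal = c * (μ B).toReal := by rw [hμB]
      _ = ∫ _x in B, c ∂μ := by rw [setIntegral_const, smul_eq_mul, mul_comm]; rfl
      _ ≤ ∫ x in B, -Real.logb 2 (p (P x)).toReal ∂μ :=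
          setIntegral_mono_on (integrableOn_const (measure_ne_top μ B))
            hintneg.integrableOn hBmeas hptwise
      _ ≤ ∫ x, -Real.logb 2 (p (P x)).toReal ∂μ :=
          setIntegral_le_integral hintneg (ae_of_all _ hfnn)
      _ = H := hHint.symm
  -- the small-measure bound on A₀
  have hA0 : μ (P ⁻¹' Sᶜ) < ENNReal.ofReal ε := by
    rw [ENNReal.lt_ofReal_iff_toReal_lt (measure_ne_top μ _)]
    have h1 : (μ (P ⁻¹' Sᶜ)).toReal ≤ H / c := (le_div_iff₀' hc0).2 hkey
    have h2 : H / c < ε := by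
      rw [div_lt_iff₀ hc0]
      have := (div_lt_iff₀ hε).1 hclt
      linarith
    linarith
  -- construct the cover
  have hcov : IsEntCover μ ρ ε k := by
    refine ⟨fun i => if i = 0 then P ⁻¹' Sᶜ
      else if h : (i : ℕ) - 1 < l.length then P ⁻¹' {l.get ⟨(i:ℕ) - 1, h⟩} else ∅,
      ?_, ?_, ?_, ?_⟩
    · intro i
      by_cases h0 : i = 0
      · simpa [h0] using hS0meas
      · simp only [h0, if_false]
        by_cases h : (i : ℕ) - 1 < l.length
        · simpa [h] using hcell _
        · simp [h]
    · apply Set.eq_univ_of_univ_subset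
      intro x _
      by_cases hxS : P x ∈ S
      · have hxT : P x ∈ l := by
          rw [hldef, Finset.mem_toList, hTdef, Set.Finite.mem_toFinset]
          exact hxS
        obtain ⟨j, hj⟩ := List.get_of_mem hxT
        have hjk : (j : ℕ) < k := lt_of_lt_of_le j.2 hllen
        refine Set.mem_iUnion.2 ⟨⟨(j : ℕ) + 1, by omega⟩, ?_⟩
        have hne0 : (⟨(j : ℕ) + 1, by omega⟩ : Fin (k + 1)) ≠ 0 := by
          simp [Fin.ext_iff]
        simp only [hne0, if_false]
        have hlt : ((⟨(j : ℕ) + 1, by omega⟩ : Fin (k + 1)) : ℕ) - 1 < l.length := by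
          simpa using j.2
        rw [dif_pos hlt]
        simp only [Set.mem_preimage, Set.mem_singleton_iff]
        rw [← hj]
        congr 1
      · exact Set.mem_iUnion.2 ⟨0, by simpa using hxS⟩
    · simpa using hA0
    · intro i hi x hx y hy
      simp only [hi, if_false] at hx hy
      by_cases h : (i : ℕ) - 1 < l.length
      · rw [dif_pos h] at hx hy
        simp only [Set.mem_preimage, Set.mem_singleton_iff] at hx hy
        rw [hρ]
        simp only [hx, hy, if_pos rfl]
        exact hε
      · rw [dif_neg h] at hx
        exact absurd hx (Set.notMem_empty x)
  calc epsEntropy μ ρ ε ≤ Real.logb 2 k := epsEntropy_le_of_cover μ ρ ε k hk1 hcov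
    _ ≤ H / ε := hlogk
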